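/- Fix a prime p. Let N be a topological abelian group such that: multiplication by p on N is injective (N is p-torsion-free); the subgroups p^n N (n ∈ ℕ) form a neighbourhood basis of 0; and the canonical map N → lim_n N/p^n N is bijective (N is p-adically complete and separated). Let S be a profinite topological space and let C(S,N) denote the abelian group of continuous maps S → N, equipped with the compact-open topology. Then the subgroups p^n · C(S,N) (n ∈ ℕ) form a neighbourhood basis of 0 in C(S,N); that is, the compact-open topology on C(S,N) coincides with the p-adic topology. -/

import Mathlib

open Filter Topology

namespace Stmt10

/-- Let `N` be a `p`-torsion-free, `p`-adically complete and separated topological abelian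
group whose topology is the `p`-adic one, and let `S` be a profinite space. Then the
subgroups `p^n · C(S,N)` form a neighbourhood basis of `0` for the compact-open topology on
`C(S, N)`: the compact-open topology coincides with the `p`-adic topology. -/
theorem compactOpen_eq_padic
    (p : ℕ) [Fact p.Prime]
    (N : Type*) [AddCommGroup N] [TopologicalSpace N] [IsTopologicalAddGroup N]
    (htf : Function.Injective fun x : N => p • x)
    (hbasis : (nhds (0 : N)).HasBasis (fun _ : ℕ => True)
      (fun n => {x : N | ∃ y : N, x = p ^ n • y}))
    (hcomplete : IsAdicComplete (Ideal.span {(p : ℤ)}) N)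
    (S : Type*) [TopologicalSpace S] [CompactSpace S] [T2Space S]
    [TotallyDisconnectedSpace S] :
    (nhds (0 : C(S, N))).HasBasis (fun _ : ℕ => True)
      (fun n => {f : C(S, N) | ∃ g : C(S, N), f = p ^ n • g}) := by
  -- The subgroups `p^n N` of `N`.
  set H : ℕ → AddSubgroup N := fun n =>
    { carrier := {x : N | ∃ y : N, x = p ^ n • y}
      zero_mem' := ⟨0, by simp⟩
      add_mem' := by
        rintro a b ⟨a', rfl⟩ ⟨b', rfl⟩
        exact ⟨a' + b', by simp [smul_add]⟩
      neg_mem' := by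
        rintro a ⟨a', rfl⟩
        exact ⟨-a', by simp⟩ } with hHdef
  -- `p^n N` is open in `N`.
  have hHnhds : ∀ n, (H n : Set N) ∈ 𝓝 (0 : N) := fun n =>
    hbasis.mem_of_mem (i := n) trivial
  have hHopen : ∀ n, IsOpen (H n : Set N) := fun n =>
    AddSubgroup.isOpen_of_mem_nhds (H n) (hHnhds n)
  -- multiplication by `p^n` is injective.
  have hinj : ∀ n, Function.Injective fun x : N => p ^ n • x := by
    intro n
    induction n with
    | zero => intro a b hab; simpa using hab
    | succ n ih =>
      intro a b hab
      simp only [pow_succ', mul_smul] at hab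
      exact ih (htf hab)
  -- multiplication by `p^n` is continuous.
  have hcont : ∀ n, Continuous fun x : N => p ^ n • x := fun n => continuous_nsmul _
  -- multiplication by `p^n` is an open map.
  have hopenMap : ∀ n, IsOpenMap fun x : N => p ^ n • x := by
    intro n U hU
    rw [isOpen_iff_mem_nhds]
    rintro _ ⟨x, hxU, rfl⟩
    have h0 : (fun y : N => x + y) ⁻¹' U ∈ 𝓝 (0 : N) := by
      have h := (continuous_add_left x).continuousAt (x := (0 : N))
      rw [ContinuousAt, add_zero] at h
      exact h (hU.mem_nhds hxU)
    obtain ⟨m, -, hm⟩ := hbasis.mem_iff.1 h0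
    have hnbd : (fun w : N => p ^ n • x + w) '' (H (n + m) : Set N) ∈ 𝓝 (p ^ n • x) := by
      refine (isOpenMap_add_left (p ^ n • x) _ (hHopen (n + m))).mem_nhds ?_
      exact ⟨0, (H (n + m)).zero_mem, by simp⟩
    refine mem_of_superset hnbd ?_
    rintro _ ⟨_, ⟨y, rfl⟩, rfl⟩
    refine ⟨x + p ^ m • y, hm ⟨y, rfl⟩, ?_⟩
    simp [smul_add, pow_add, mul_smul]
  have hemb : ∀ n, IsOpenEmbedding fun x : N => p ^ n • x := fun n =>
    IsOpenEmbedding.of_continuous_injective_isOpenMap (hcont n) (hinj n) (hopenMap n)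
  -- key: a continuous map with values in `p^n N` is `p^n` times a continuous map.
  have key : ∀ (n : ℕ) (f : C(S, N)), (∀ s, f s ∈ H n) → ∃ g : C(S, N), f = p ^ n • g := by
    intro n f hf
    choose g hg using hf
    have hgc : Continuous g := by
      rw [(hemb n).toIsInducing.continuous_iff]
      have : (fun x : N => p ^ n • x) ∘ g = ⇑f := by
        funext s; simp [Function.comp, (hg s).symm]
      rw [this]
      exact f.continuous
    refine ⟨⟨g, hgc⟩, ?_⟩
    ext s
    simpa using hg s
  -- the sets `p^n C(S,N)` are antitone
  have hmono : ∀ m n : ℕ, m ≤ n →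
      {f : C(S, N) | ∃ g : C(S, N), f = p ^ n • g} ⊆
        {f : C(S, N) | ∃ g : C(S, N), f = p ^ m • g} := by
    rintro m n hmn _ ⟨g, rfl⟩
    refine ⟨p ^ (n - m) • g, ?_⟩
    rw [smul_smul, ← pow_add, Nat.add_sub_cancel' hmn]
  rw [Filter.hasBasis_iff]
  -- the auxiliary filter with basis `p^n C(S,N)`
  have hFbasis : (⨅ n : ℕ, 𝓟 {f : C(S, N) | ∃ g : C(S, N), f = p ^ n • g}).HasBasis
      (fun _ : ℕ => True) (fun n => {f : C(S, N) | ∃ g : C(S, N), f = p ^ n • g}) := by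
    refine hasBasis_iInf_principal ?_
    intro a b
    exact ⟨max a b, hmono a _ (le_max_left a b), hmono b _ (le_max_right a b)⟩
  have hle : (⨅ n : ℕ, 𝓟 {f : C(S, N) | ∃ g : C(S, N), f = p ^ n • g}) ≤ 𝓝 (0 : C(S, N)) := by
    rw [← tendsto_id']
    rw [ContinuousMap.tendsto_nhds_compactOpen]
    intro K hK U hU h0
    rcases K.eq_empty_or_nonempty with rfl | ⟨s0, hs0⟩
    · exact Eventually.of_forall fun f => Set.mapsTo_empty _ _
    · have h0U : (0 : N) ∈ U := by simpa using h0 hs0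
      obtain ⟨m, -, hm⟩ := hbasis.mem_iff.1 (hU.mem_nhds h0U)
      refine hFbasis.eventually_iff.2 ⟨m, trivial, ?_⟩
      rintro _ ⟨g, rfl⟩ s _
      exact hm ⟨g s, by simp⟩
  intro t
  constructor
  · intro ht
    exact hFbasis.mem_iff.1 (hle ht)
  · rintro ⟨n, -, hsub⟩
    refine mem_of_superset ?_ hsub
    have hopen : IsOpen {f : C(S, N) | Set.MapsTo ⇑f Set.univ (H n : Set N)} :=
      ContinuousMap.isOpen_setOf_mapsTo isCompact_univ (hHopen n)
    have h0 : (0 : C(S, N)) ∈ {f : C(S, N) | Set.MapsTo ⇑f Set.univ (H n : Set N)} :=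
      fun s _ => by simpa using (H n).zero_mem
    refine mem_of_superset (hopen.mem_nhds h0) ?_
    intro f hf
    exact key n f fun s => hf (Set.mem_univ s)

end Stmt10
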